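/- For every n ≥ 1, there exists a permutation w ∈ S_n with w(1) = 1 that attains the maximum of Υ over S_n, i.e. Υ_w ≥ Υ_v for all v ∈ S_n. -/

import Mathlib

open Equiv Finset

namespace Schubert

variable {n : ℕ}

/-- Number of inversions of a permutation of `{0,...,n-1}`. -/
def len (w : Perm (Fin n)) : ℕ :=
  (Finset.univ.filter (fun p : Fin n × Fin n => p.1 < p.2 ∧ w p.2 < w p.1)).card

/-- One-based application: `app w i = w(i)` for `1 ≤ i ≤ n` (junk otherwise). -/
def app (w : Perm (Fin n)) (i : ℕ) : ℕ :=
  if h : i - 1 < n then ((w ⟨i - 1, h⟩ : Fin n) : ℕ) + 1 else i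

/-- The adjacent transposition `s_i` (one-based), swapping positions `i` and `i+1`. -/
def s (n : ℕ) (i : ℕ) : Perm (Fin n) :=
  if h : 1 ≤ i ∧ i < n then Equiv.swap ⟨i - 1, by omega⟩ ⟨i, h.2⟩ else 1

/-- The transposition `t_(a,b)` (one-based), swapping positions `a` and `b`. -/
def t (n : ℕ) (a b : ℕ) : Perm (Fin n) :=
  if h : 1 ≤ a ∧ a ≤ n ∧ 1 ≤ b ∧ b ≤ n then
    Equiv.swap ⟨a - 1, by omega⟩ ⟨b - 1, by omega⟩ else 1

/-- The longest permutation `w_0 = (n, n-1, ..., 1)`. -/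
def w0 (n : ℕ) : Perm (Fin n) where
  toFun i := ⟨n - 1 - i.val, by have := i.isLt; omega⟩
  invFun i := ⟨n - 1 - i.val, by have := i.isLt; omega⟩
  left_inv i := by have := i.isLt; apply Fin.ext; show n - 1 - (n - 1 - i.val) = i.val; omega
  right_inv i := by have := i.isLt; apply Fin.ext; show n - 1 - (n - 1 - i.val) = i.val; omega

/-- Descent set (one-based): `Des(w) = {i ∈ {1,...,n-1} : w(i) > w(i+1)}`. -/
def des (w : Perm (Fin n)) : Finset ℕ :=
  (Finset.Icc 1 (n - 1)).filter (fun i => app w (i + 1) < app w i)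

/-- Major index. -/
def maj (w : Perm (Fin n)) : ℕ := ∑ i ∈ des w, i

open Classical in
/-- The principal Schubert specialization
`Υ_w = 𝔖_w(1,...,1) = (1/ℓ(w)!) ∑_{(a_1,...,a_{ℓ(w)}) ∈ R(w)} a_1 ⋯ a_{ℓ(w)}`,
where a reduced word for `w` is a word of length `ℓ(w)` in letters `1,...,n-1`
whose product of adjacent transpositions is `w`. -/
noncomputable def Upsilon (w : Perm (Fin n)) : ℚ :=
  (∑ f : Fin (len w) → Fin (n - 1),
      if (List.ofFn (fun j => s n ((f j : ℕ) + 1))).prod = w then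
        ∏ j, ((f j : ℚ) + 1)
      else 0)
    / (len w).factorial


/-! ### Auxiliary development -/

open Classical in
/-- Weighted count of words of length `L` with product `w`. -/
noncomputable def Nw (L : ℕ) (w : Perm (Fin n)) : ℚ :=
  ∑ f : Fin L → Fin (n - 1),
      if (List.ofFn (fun j => s n ((f j : ℕ) + 1))).prod = w then
        ∏ j, ((f j : ℚ) + 1)
      else 0

lemma Upsilon_eq (w : Perm (Fin n)) :
    Upsilon w = Nw (len w) w / (len w).factorial := rfl

lemma Nw_nonneg (L : ℕ) (w : Perm (Fin n)) : 0 ≤ Nw L w := by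
  refine Finset.sum_nonneg fun f _ => ?_
  split_ifs with h
  · exact Finset.prod_nonneg fun j _ => by positivity
  · exact le_refl 0

lemma Upsilon_nonneg (w : Perm (Fin n)) : 0 ≤ Upsilon w := by
  rw [Upsilon_eq]
  exact div_nonneg (Nw_nonneg _ _) (by positivity)

lemma s_apply {a : ℕ} (h1 : 1 ≤ a) (h2 : a < n) (x : Fin n) :
    ((s n a x : Fin n) : ℕ) = if (x : ℕ) = a - 1 then a else if (x : ℕ) = a then a - 1 else x := by
  rw [s, dif_pos ⟨h1, h2⟩, Equiv.swap_apply_def]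
  have e1 : (x = (⟨a - 1, by omega⟩ : Fin n)) ↔ (x : ℕ) = a - 1 := by
    rw [Fin.ext_iff]
  have e2 : (x = (⟨a, h2⟩ : Fin n)) ↔ (x : ℕ) = a := by
    rw [Fin.ext_iff]
  by_cases hx1 : (x : ℕ) = a - 1
  · rw [if_pos (e1.mpr hx1), if_pos hx1]
  · rw [if_neg (fun h => hx1 (e1.mp h)), if_neg hx1]
    by_cases hx2 : (x : ℕ) = a
    · rw [if_pos (e2.mpr hx2), if_pos hx2]
    · rw [if_neg (fun h => hx2 (e2.mp h)), if_neg hx2]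

lemma s_inv (a : ℕ) : (s n a)⁻¹ = s n a := by
  rw [s]
  split_ifs with h
  · exact Equiv.swap_inv _ _
  · exact inv_one

lemma s_mul_self (a : ℕ) : s n a * s n a = 1 := by
  rw [s]
  split_ifs with h
  · exact Equiv.swap_mul_self _ _
  · exact one_mul 1

/-- The cycle moving position `k` to the front: `c k = s_k s_{k-1} ⋯ s_1`. -/
def c : ℕ → Perm (Fin n)
  | 0 => 1
  | (k+1) => s n (k+1) * c k

lemma c_zero : (c 0 : Perm (Fin n)) = 1 := rfl

lemma c_succ_eq (k : ℕ) : (c (k+1) : Perm (Fin n)) = s n (k+1) * c k := rfl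

lemma c_apply {k : ℕ} (hk : k < n) (x : Fin n) :
    ((c k x : Fin n) : ℕ) =
      if (x : ℕ) = 0 then k else if (x : ℕ) ≤ k then (x : ℕ) - 1 else (x : ℕ) := by
  induction k with
  | zero =>
      rw [c_zero]
      simp only [Perm.one_apply]
      have := x.isLt
      split_ifs <;> omega
  | succ k ih =>
      have hk' : k < n := by omega
      have hx := x.isLt
      have h1 : ((c (k+1) : Perm (Fin n)) x : ℕ) = ((s n (k+1)) ((c k : Perm (Fin n)) x) : ℕ) := rfl
      rw [h1, s_apply (by omega) hk, ih hk']
      split_ifs <;> omega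

/-- descent at (one-based) letter `b+1`, i.e. positions `b, b+1` (zero-based). -/
def dsc (w : Perm (Fin n)) (b : Fin (n-1)) : Prop :=
  w ⟨(b : ℕ) + 1, by have := b.isLt; omega⟩ < w ⟨(b : ℕ), by have := b.isLt; omega⟩

instance (w : Perm (Fin n)) (b : Fin (n-1)) : Decidable (dsc w b) := by
  unfold dsc; infer_instance

lemma len_pos_of_dsc {w : Perm (Fin n)} {b : Fin (n-1)} (h : dsc w b) : 0 < len w := by
  rw [len, Finset.card_pos]
  refine ⟨(⟨(b : ℕ), by have := b.isLt; omega⟩, ⟨(b : ℕ) + 1, by have := b.isLt; omega⟩), ?_⟩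
  simp only [Finset.mem_filter, Finset.mem_univ, true_and]
  exact ⟨by simp [Fin.lt_def], h⟩

lemma len_one : len (1 : Perm (Fin n)) = 0 := by
  rw [len, Finset.card_eq_zero]
  refine Finset.filter_false_of_mem fun p _ => ?_
  rintro ⟨h1, h2⟩
  simp only [Perm.one_apply] at h2
  exact absurd h1 (not_lt.mpr h2.le)

/-- Key inversion-counting lemma: right-multiplying by an adjacent swap at a descent
decreases the length by one. -/
lemma len_mul_swap {w : Perm (Fin n)} {i j : Fin n} (hij : (i : ℕ) + 1 = (j : ℕ))
    (hd : w j < w i) : len (w * Equiv.swap i j) + 1 = len w := by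
  classical
  have hij' : i < j := by rw [Fin.lt_def]; omega
  -- sorting sublemma
  have sort : ∀ p q : Fin n, p < q → ¬(p = i ∧ q = j) →
      Equiv.swap i j p < Equiv.swap i j q := by
    intro p q hpq hne
    have hp := p.isLt; have hq := q.isLt
    rw [Equiv.swap_apply_def, Equiv.swap_apply_def]
    rw [Fin.lt_def] at hpq ⊢
    split_ifs with g1 g2 g3 g4 <;> simp_all [Fin.ext_iff] <;> omega
  set A := Finset.univ.filter (fun p : Fin n × Fin n => p.1 < p.2 ∧ w p.2 < w p.1) with hA
  set B := Finset.univ.filter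
      (fun p : Fin n × Fin n => p.1 < p.2 ∧ (w * Equiv.swap i j) p.2 < (w * Equiv.swap i j) p.1)
      with hB
  have hijA : (i, j) ∈ A := by
    simp only [hA, Finset.mem_filter, Finset.mem_univ, true_and]
    exact ⟨hij', hd⟩
  have hijB : (i, j) ∉ B := by
    simp only [hB, Finset.mem_filter, Finset.mem_univ, true_and, not_and]
    intro _
    simp only [Perm.mul_apply, Equiv.swap_apply_left, Equiv.swap_apply_right]
    exact not_lt.mpr hd.le
  have hcard : B.card = (A.erase (i, j)).card := by
    refine Finset.card_nbij' (fun p => (Equiv.swap i j p.1, Equiv.swap i j p.2))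
      (fun p => (Equiv.swap i j p.1, Equiv.swap i j p.2)) ?_ ?_ ?_ ?_
    · intro p hpB
      have hne : ¬(p.1 = i ∧ p.2 = j) := by
        rintro ⟨e1, e2⟩
        apply hijB
        have hpe : p = (i, j) := Prod.ext e1 e2
        rwa [hpe] at hpB
      simp only [hB, Finset.mem_coe, Finset.mem_filter, Finset.mem_univ, true_and] at hpB
      obtain ⟨h1, h2⟩ := hpB
      refine Finset.mem_erase.mpr ⟨?_, ?_⟩
      · intro he
        rw [Prod.ext_iff] at he
        have e1 : p.1 = j := by
          have h3 : Equiv.swap i j p.1 = i := he.1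
          have h4 := congrArg (Equiv.swap i j) h3
          simpa [Equiv.swap_apply_self, Equiv.swap_apply_left] using h4
        have e2 : p.2 = i := by
          have h3 : Equiv.swap i j p.2 = j := he.2
          have h4 := congrArg (Equiv.swap i j) h3
          simpa [Equiv.swap_apply_self, Equiv.swap_apply_right] using h4
        rw [e1, e2] at h1
        exact absurd hij' (not_lt.mpr h1.le)
      · simp only [hA, Finset.mem_filter, Finset.mem_univ, true_and]
        refine ⟨sort _ _ h1 hne, ?_⟩
        simpa [Perm.mul_apply] using h2
    · intro p hp
      rw [Finset.mem_coe, Finset.mem_erase] at hp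
      obtain ⟨hne0, hp⟩ := hp
      simp only [hA, Finset.mem_filter, Finset.mem_univ, true_and] at hp
      obtain ⟨h1, h2⟩ := hp
      have hne : ¬(p.1 = i ∧ p.2 = j) := by
        rintro ⟨e1, e2⟩
        exact hne0 (Prod.ext e1 e2)
      simp only [hB, Finset.mem_coe, Finset.mem_filter, Finset.mem_univ, true_and]
      refine ⟨sort _ _ h1 hne, ?_⟩
      simpa [Perm.mul_apply, Equiv.swap_apply_self] using h2
    · intro p _
      simp [Equiv.swap_apply_self]
    · intro p _
      simp [Equiv.swap_apply_self]
  have hfin : (A.erase (i, j)).card + 1 = A.card := Finset.card_erase_add_one hijA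
  rw [len, len, ← hA, ← hB, hcard, hfin]

lemma not_dsc_iff {w : Perm (Fin n)} {b : Fin (n-1)} :
    ¬ dsc w b ↔ w ⟨(b : ℕ), by have := b.isLt; omega⟩ < w ⟨(b : ℕ) + 1, by have := b.isLt; omega⟩ := by
  unfold dsc
  constructor
  · intro h
    rcases lt_or_eq_of_le (not_lt.mp h) with h' | h'
    · exact h'
    · exfalso
      have h2 := w.injective h'
      rw [Fin.ext_iff] at h2
      simp only [Fin.val_mk] at h2
      omega
  · intro h
    exact not_lt.mpr h.le

lemma s_eq_swap (b : Fin (n-1)) :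
    s n ((b : ℕ) + 1) = Equiv.swap ⟨(b : ℕ), by have := b.isLt; omega⟩
      ⟨(b : ℕ) + 1, by have := b.isLt; omega⟩ := by
  have hb := b.isLt
  rw [s, dif_pos (⟨by omega, by omega⟩ : 1 ≤ (b : ℕ) + 1 ∧ (b : ℕ) + 1 < n)]
  congr 1

lemma len_mul_s_desc {w : Perm (Fin n)} {b : Fin (n-1)} (hd : dsc w b) :
    len (w * s n ((b : ℕ) + 1)) + 1 = len w := by
  rw [s_eq_swap]
  exact len_mul_swap (by simp) hd

lemma len_mul_s_asc {w : Perm (Fin n)} {b : Fin (n-1)} (hd : ¬ dsc w b) :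
    len (w * s n ((b : ℕ) + 1)) = len w + 1 := by
  rw [not_dsc_iff] at hd
  have h2 : dsc (w * s n ((b : ℕ) + 1)) b := by
    unfold dsc
    rw [s_eq_swap]
    simpa [Perm.mul_apply, Equiv.swap_apply_left, Equiv.swap_apply_right] using hd
  have h3 := len_mul_s_desc h2
  rw [s_eq_swap] at h3 ⊢
  rw [mul_assoc, Equiv.swap_mul_self, mul_one] at h3
  omega

/-- splitting off the last letter. -/
def snocE (m L : ℕ) : ((Fin L → Fin m) × Fin m) ≃ (Fin (L+1) → Fin m) where
  toFun p := Fin.snoc p.1 p.2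
  invFun f := (Fin.init f, f (Fin.last L))
  left_inv p := by simp
  right_inv f := by simp

lemma Nw_succ (L : ℕ) (w : Perm (Fin n)) :
    Nw (L+1) w = ∑ x : Fin (n-1), ((x : ℚ) + 1) * Nw L (w * s n ((x : ℕ) + 1)) := by
  classical
  rw [Nw, ← Equiv.sum_comp (snocE (n-1) L)
    (fun f : Fin (L+1) → Fin (n-1) =>
      if (List.ofFn (fun j => s n ((f j : ℕ) + 1))).prod = w then ∏ j, ((f j : ℚ) + 1) else 0)]
  rw [Fintype.sum_prod_type, Finset.sum_comm]
  refine Finset.sum_congr rfl fun x _ => ?_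
  rw [Nw, Finset.mul_sum]
  refine Finset.sum_congr rfl fun g _ => ?_
  have happ : ((snocE (n-1) L) (g, x) : Fin (L+1) → Fin (n-1)) = Fin.snoc g x := rfl
  have hlist : (List.ofFn fun j => s n ((((snocE (n-1) L) (g, x)) j : ℕ) + 1)) =
      (List.ofFn fun j : Fin L => s n ((g j : ℕ) + 1)).concat (s n ((x : ℕ) + 1)) := by
    rw [List.ofFn_succ']
    congr 1
    · exact congrArg _ (funext fun i => by rw [happ, Fin.snoc_castSucc])
    · rw [happ, Fin.snoc_last]
  have hprod : (∏ j : Fin (L+1), ((((snocE (n-1) L) (g, x)) j : ℚ) + 1)) =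
      (∏ j : Fin L, ((g j : ℚ) + 1)) * ((x : ℚ) + 1) := by
    rw [Fin.prod_univ_castSucc]
    congr 1
    · exact Finset.prod_congr rfl fun i _ => by rw [happ, Fin.snoc_castSucc]
    · rw [happ, Fin.snoc_last]
  rw [hlist, hprod, List.prod_concat]
  have hcond : ((List.ofFn fun j : Fin L => s n ((g j : ℕ) + 1)).prod * s n ((x : ℕ) + 1) = w) ↔
      ((List.ofFn fun j : Fin L => s n ((g j : ℕ) + 1)).prod = w * s n ((x : ℕ) + 1)) := by
    constructor
    · intro h
      rw [← h, mul_assoc, s_mul_self, mul_one]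
    · intro h
      rw [h, mul_assoc, s_mul_self, mul_one]
  by_cases hc : (List.ofFn fun j : Fin L => s n ((g j : ℕ) + 1)).prod = w * s n ((x : ℕ) + 1)
  · rw [if_pos (hcond.mpr hc), if_pos hc]
    ring
  · rw [if_neg (fun hh => hc (hcond.mp hh)), if_neg hc, mul_zero]

lemma Nw_zero (w : Perm (Fin n)) : Nw 0 w = if (1 : Perm (Fin n)) = w then 1 else 0 := by
  rw [Nw]
  rw [Finset.sum_eq_single (fun j : Fin 0 => j.elim0)]
  · simp
  · intro f _ hf
    exact absurd (funext fun j => j.elim0) hf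
  · intro h
    exact absurd (Finset.mem_univ _) h

lemma Nw_eq_zero_of_lt : ∀ L : ℕ, ∀ w : Perm (Fin n), L < len w → Nw L w = 0 := by
  intro L
  induction L with
  | zero =>
      intro w hw
      rw [Nw_zero, if_neg]
      intro h1
      rw [← h1, len_one] at hw
      omega
  | succ L ih =>
      intro w hw
      rw [Nw_succ]
      refine Finset.sum_eq_zero fun x _ => ?_
      rw [ih, mul_zero]
      by_cases hd : dsc w x
      · have := len_mul_s_desc hd
        omega
      · have := len_mul_s_asc hd
        omega

lemma Nw_len (w : Perm (Fin n)) :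
    Nw (len w) w = ((len w).factorial : ℚ) * Upsilon w := by
  rw [Upsilon_eq]
  field_simp

/-- Macdonald-type recursion for `Upsilon`. -/
lemma ups_rec (z : Perm (Fin n)) :
    (len z : ℚ) * Upsilon z =
      ∑ b : Fin (n-1), if dsc z b then ((b : ℚ) + 1) * Upsilon (z * s n ((b : ℕ) + 1)) else 0 := by
  classical
  rcases h : len z with _ | L
  · rw [Nat.cast_zero, zero_mul]
    refine (Finset.sum_eq_zero fun b _ => ?_).symm
    rw [if_neg]
    intro hd
    have := len_pos_of_dsc hd
    omega
  · have key : Nw (L+1) z =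
        (L.factorial : ℚ) * ∑ b : Fin (n-1),
          if dsc z b then ((b : ℚ) + 1) * Upsilon (z * s n ((b : ℕ) + 1)) else 0 := by
      rw [Nw_succ, Finset.mul_sum]
      refine Finset.sum_congr rfl fun b _ => ?_
      by_cases hd : dsc z b
      · have hlen : len (z * s n ((b : ℕ) + 1)) = L := by
          have := len_mul_s_desc hd
          omega
        rw [if_pos hd]
        have hNwL : Nw L (z * s n ((b : ℕ) + 1)) =
            (L.factorial : ℚ) * Upsilon (z * s n ((b : ℕ) + 1)) := by
          rw [← hlen, Nw_len, hlen]
        rw [hNwL]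
        ring
      · have hlen : len (z * s n ((b : ℕ) + 1)) = len z + 1 := len_mul_s_asc hd
        rw [if_neg hd, Nw_eq_zero_of_lt L _ (by omega), mul_zero, mul_zero]
    have hNz : Nw (L+1) z = (((L+1).factorial : ℕ) : ℚ) * Upsilon z := by
      have := Nw_len z
      rwa [h] at this
    have hLfac : (L.factorial : ℚ) ≠ 0 := by positivity
    have e1 : (L.factorial : ℚ) * (((L : ℚ) + 1) * Upsilon z) =
        (L.factorial : ℚ) * ∑ b : Fin (n-1),
          if dsc z b then ((b : ℚ) + 1) * Upsilon (z * s n ((b : ℕ) + 1)) else 0 := by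
      rw [← key, hNz, Nat.factorial_succ]
      push_cast
      ring
    have e2 := mul_left_cancel₀ hLfac e1
    rw [Nat.cast_add, Nat.cast_one]
    exact e2

/-- `len (u * c k) + k = len u` when value `0` sits at position `k`. -/
lemma len_mul_c (hn : 0 < n) :
    ∀ k : ℕ, ∀ hk : k < n, ∀ u : Perm (Fin n),
      u ⟨k, hk⟩ = ⟨0, hn⟩ → len (u * c k) + k = len u := by
  intro k
  induction k with
  | zero =>
      intro hk u hu
      rw [c_zero, mul_one]
      omega

  | succ k ih =>
      intro hk u hu
      have hk' : k < n := by omega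
      have hb : (k : ℕ) < n - 1 := by omega
      have hne : u ⟨k, hk'⟩ ≠ ⟨0, hn⟩ := by
        intro hcon
        have h2 := u.injective (hcon.trans hu.symm)
        have h3 : k = k + 1 := congrArg Fin.val h2
        omega
      have hposval : 0 < ((u ⟨k, hk'⟩ : Fin n) : ℕ) := by
        rcases Nat.eq_zero_or_pos ((u ⟨k, hk'⟩ : Fin n) : ℕ) with h | h
        · exact absurd (Fin.ext h : u ⟨k, hk'⟩ = ⟨0, hn⟩) hne
        · exact h
      have hd : dsc u (⟨k, hb⟩ : Fin (n-1)) := by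
        unfold dsc
        rw [Fin.lt_def]
        show ((u ⟨k + 1, hk⟩ : Fin n) : ℕ) < ((u ⟨k, hk'⟩ : Fin n) : ℕ)
        rw [hu]
        exact hposval
      have hvk : ((⟨k, hb⟩ : Fin (n-1)) : ℕ) = k := rfl
      have hlen1 : len (u * s n (k + 1)) + 1 = len u := by
        have hh := len_mul_s_desc hd
        rwa [hvk] at hh
      have hu' : (u * s n (k + 1)) ⟨k, hk'⟩ = ⟨0, hn⟩ := by
        have hval : ((s n (k+1)) ⟨k, hk'⟩ : ℕ) = k + 1 := by
          rw [s_apply (a := k+1) (by omega) hk]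
          simp
        have harg : (s n (k+1)) ⟨k, hk'⟩ = ⟨k+1, hk⟩ := Fin.ext hval
        show u ((s n (k+1)) ⟨k, hk'⟩) = ⟨0, hn⟩
        rw [harg, hu]
      have hih := ih hk' (u * s n (k+1)) hu'
      have hassoc : u * c (k+1) = (u * s n (k+1)) * c k := by
        rw [c_succ_eq, ← mul_assoc]
      rw [hassoc]
      omega

/-- commutation: `s_α * c_k = c_k * s_{α+1}` for `1 ≤ α`, `α+1 ≤ k < n`. -/
lemma s_mul_c_comm {α k : ℕ} (h1 : 1 ≤ α) (h2 : α + 1 ≤ k) (hk : k < n) :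
    s n α * c k = c k * s n (α + 1) := by
  apply Equiv.ext
  intro x
  apply Fin.ext
  have hx := x.isLt
  show ((s n α) ((c k : Perm (Fin n)) x) : ℕ) = ((c k : Perm (Fin n)) ((s n (α+1)) x) : ℕ)
  have hsx : (((s n (α+1)) x : ℕ) = α + 1 ∧ (x : ℕ) = α) ∨
      (((s n (α+1)) x : ℕ) = α ∧ (x : ℕ) = α + 1) ∨
      (((s n (α+1)) x : ℕ) = (x : ℕ) ∧ (x : ℕ) ≠ α ∧ (x : ℕ) ≠ α + 1) := by
    rw [s_apply (a := α + 1) (by omega) (by omega)]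
    have e : α + 1 - 1 = α := by omega
    rw [e]
    split_ifs with g1 g2
    · exact Or.inl ⟨rfl, g1⟩
    · exact Or.inr (Or.inl ⟨rfl, g2⟩)
    · exact Or.inr (Or.inr ⟨rfl, g1, g2⟩)
  rw [s_apply (a := α) h1 (by omega), c_apply hk, c_apply hk]
  rcases hsx with ⟨e1, e2⟩ | ⟨e1, e2⟩ | ⟨e1, e2, e3⟩ <;> rw [e1] <;> split_ifs <;>
    first
      | omega
      | exact (by assumption : False).elim

/-- commutation: `s_α * c_k = c_k * s_α` for `k + 2 ≤ α < n`. -/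
lemma s_mul_c_comm' {α k : ℕ} (h1 : k + 2 ≤ α) (h2 : α < n) :
    s n α * c k = c k * s n α := by
  have hk : k < n := by omega
  apply Equiv.ext
  intro x
  apply Fin.ext
  have hx := x.isLt
  show ((s n α) ((c k : Perm (Fin n)) x) : ℕ) = ((c k : Perm (Fin n)) ((s n α) x) : ℕ)
  have hsx : (((s n α) x : ℕ) = α ∧ (x : ℕ) = α - 1) ∨
      (((s n α) x : ℕ) = α - 1 ∧ (x : ℕ) = α) ∨
      (((s n α) x : ℕ) = (x : ℕ) ∧ (x : ℕ) ≠ α - 1 ∧ (x : ℕ) ≠ α) := by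
    rw [s_apply (a := α) (by omega) h2]
    split_ifs with g1 g2
    · exact Or.inl ⟨rfl, g1⟩
    · exact Or.inr (Or.inl ⟨rfl, g2⟩)
    · exact Or.inr (Or.inr ⟨rfl, g1, g2⟩)
  rw [s_apply (a := α) (by omega) h2, c_apply hk, c_apply hk]
  rcases hsx with ⟨e1, e2⟩ | ⟨e1, e2⟩ | ⟨e1, e2, e3⟩ <;> rw [e1] <;> split_ifs <;>
    first
      | omega
      | exact (by assumption : False).elim

lemma s_apply_fix {α k : ℕ} (h1 : 1 ≤ α) (h2 : α < n) (hk : k < n)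
    (hne1 : α ≠ k) (hne2 : α ≠ k + 1) : (s n α) ⟨k, hk⟩ = ⟨k, hk⟩ := by
  apply Fin.ext
  rw [s_apply h1 h2]
  simp only [Fin.val_mk]
  split_ifs <;> omega

/-- Key lemma: moving the value `0` to the front does not decrease `Upsilon`. -/
lemma key (hn : 0 < n) :
    ∀ L : ℕ, ∀ u : Perm (Fin n), len u = L →
      Upsilon u ≤ Upsilon (u * c ((u⁻¹ ⟨0, hn⟩ : Fin n) : ℕ)) := by
  intro L
  induction L using Nat.strong_induction_on with
  | _ L ih =>
    intro u hL
    have hklt : ((u⁻¹ ⟨0, hn⟩ : Fin n) : ℕ) < n := (u⁻¹ ⟨0, hn⟩).isLt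
    rcases hcases : ((u⁻¹ ⟨0, hn⟩ : Fin n) : ℕ) with _ | m
    · rw [c_zero, mul_one]
    -- main case: position of 0 is k = m + 1 ≥ 1
    rw [hcases] at hklt
    have hk : m + 1 < n := hklt
    have hm : m < n := by omega
    have huk : u ⟨m + 1, hk⟩ = ⟨0, hn⟩ := by
      have he : (⟨m + 1, hk⟩ : Fin n) = u⁻¹ ⟨0, hn⟩ := Fin.ext (by rw [hcases])
      rw [he]
      exact Equiv.apply_symm_apply u ⟨0, hn⟩
    set M : Perm (Fin n) := u * c (m + 1) with hM
    have hlenM : len M + (m + 1) = len u := len_mul_c hn (m + 1) hk u huk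
    have hLpos : 1 ≤ L := by omega
    -- inverse computations: (u * s_α)⁻¹ 0 = s_α ⟨m+1⟩
    have hKinv : ∀ α : ℕ, ((u * s n α)⁻¹ ⟨0, hn⟩ : Fin n) = (s n α) ⟨m + 1, hk⟩ := by
      intro α
      rw [mul_inv_rev, Perm.mul_apply, s_inv]
      congr 1
      exact Fin.ext (by rw [hcases])
    -- u(m) is positive
    have hne : u ⟨m, hm⟩ ≠ ⟨0, hn⟩ := by
      intro hcon
      have h2 := u.injective (hcon.trans huk.symm)
      have h3 : m = m + 1 := congrArg Fin.val h2
      omega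
    have hposval : 0 < ((u ⟨m, hm⟩ : Fin n) : ℕ) := by
      rcases Nat.eq_zero_or_pos ((u ⟨m, hm⟩ : Fin n) : ℕ) with h | h
      · exact absurd (Fin.ext h : u ⟨m, hm⟩ = ⟨0, hn⟩) hne
      · exact h
    -- the distinguished descent b₀ (letter m+1)
    have hb0lt : m < n - 1 := by omega
    have hd0 : dsc u (⟨m, hb0lt⟩ : Fin (n-1)) := by
      unfold dsc
      rw [Fin.lt_def]
      show ((u ⟨m + 1, hk⟩ : Fin n) : ℕ) < ((u ⟨m, hm⟩ : Fin n) : ℕ)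
      rw [huk]
      exact hposval
    -- T and G
    set T : Fin (n-1) → ℚ := fun b =>
      if dsc u b then ((b : ℚ) + 1) * Upsilon (u * s n ((b : ℕ) + 1)) else 0 with hT
    set G : Fin (n-1) → ℚ := fun b =>
      if dsc M b then ((b : ℚ) + 1) * Upsilon (M * s n ((b : ℕ) + 1)) else 0 with hG
    have hGnonneg : ∀ b, 0 ≤ G b := by
      intro b
      rw [hG]
      dsimp only
      split_ifs with h
      · have hb1 : (0:ℚ) ≤ (b : ℚ) + 1 := by positivity
        exact mul_nonneg hb1 (Upsilon_nonneg _)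
      · exact le_refl 0
    have hrecu : (len u : ℚ) * Upsilon u = ∑ b, T b := ups_rec u
    have hrecM : (len M : ℚ) * Upsilon M = ∑ b, G b := ups_rec M
    -- bound for the b₀ term
    have hTb0 : T (⟨m, hb0lt⟩ : Fin (n-1)) ≤ ((m : ℚ) + 1) * Upsilon M := by
      rw [hT]
      dsimp only
      rw [if_pos hd0]
      have hvm : ((⟨m, hb0lt⟩ : Fin (n-1)) : ℕ) = m := rfl
      have hlen' : len (u * s n (m + 1)) + 1 = len u := by
        have hh := len_mul_s_desc hd0
        rwa [hvm] at hh
      have hult : len (u * s n (m + 1)) < L := by omega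
      have hIH := ih _ hult (u * s n (m + 1)) rfl
      have hsk : (s n (m + 1)) ⟨m + 1, hk⟩ = ⟨m, hm⟩ := by
        apply Fin.ext
        rw [s_apply (by omega) hk]
        simp only [Fin.val_mk]
        split_ifs <;> omega
      have hKval : ((u * s n (m + 1))⁻¹ ⟨0, hn⟩ : Fin n) = ⟨m, hm⟩ := by
        rw [hKinv (m + 1), hsk]
      rw [hKval] at hIH
      simp only [Fin.val_mk] at hIH
      have hMeq : (u * s n (m + 1)) * c m = M := by
        rw [hM, mul_assoc, c_succ_eq]
      rw [hMeq] at hIH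
      exact mul_le_mul_of_nonneg_left hIH (by positivity)
    -- the injection on the remaining descents
    have hι : ∀ b : Fin (n-1), (b : ℕ) + 1 ≤ m → (b : ℕ) + 1 < n - 1 := by
      intro b hb
      omega
    set ι : Fin (n-1) → Fin (n-1) := fun b =>
      if h : (b : ℕ) + 1 ≤ m then ⟨(b : ℕ) + 1, hι b h⟩ else b with hιdef
    -- c_k values
    have hcM : ∀ (q : ℕ) (hq : q < n) (hq2 : 1 ≤ q) (hq3 : q ≤ m + 1) (hq4 : q - 1 < n),
        (c (m + 1) : Perm (Fin n)) ⟨q, hq⟩ = ⟨q - 1, hq4⟩ := by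
      intro q hq hq2 hq3 hq4
      apply Fin.ext
      rw [c_apply hk]
      simp only [Fin.val_mk]
      split_ifs <;> omega
    have hcMfix : ∀ (q : ℕ) (hq : q < n), m + 1 < q →
        (c (m + 1) : Perm (Fin n)) ⟨q, hq⟩ = ⟨q, hq⟩ := by
      intro q hq hmq
      apply Fin.ext
      rw [c_apply hk]
      simp only [Fin.val_mk]
      split_ifs <;> omega
    -- termwise bound on erase b₀
    have hterm : ∀ b ∈ Finset.univ.erase (⟨m, hb0lt⟩ : Fin (n-1)), T b ≤ G (ι b) := by
      intro b hb
      have hbne : (b : ℕ) ≠ m := by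
        intro hcon
        exact (Finset.mem_erase.mp hb).1 (Fin.ext hcon)
      have hblt := b.isLt
      by_cases hd : dsc u b
      · have hα1 : 1 ≤ (b : ℕ) + 1 := by omega
        have hαn : (b : ℕ) + 1 < n := by omega
        have hαk : (b : ℕ) + 1 ≠ m + 1 := by omega
        by_cases hαk1 : (b : ℕ) = m + 1
        · -- letter m+2 : not a descent since u(m+1) = 0
          exfalso
          unfold dsc at hd
          rw [Fin.lt_def] at hd
          have hshow : ((u ⟨(b : ℕ), by omega⟩ : Fin n) : ℕ) = 0 := by
            have harg : (⟨(b : ℕ), by omega⟩ : Fin n) = ⟨m + 1, hk⟩ := Fin.ext hαk1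
            rw [harg, huk]
          omega
        -- IH for u * s_α
        have hlen' : len (u * s n ((b : ℕ) + 1)) + 1 = len u := len_mul_s_desc hd
        have hult : len (u * s n ((b : ℕ) + 1)) < L := by omega
        have hIH := ih _ hult (u * s n ((b : ℕ) + 1)) rfl
        have hKval : ((u * s n ((b : ℕ) + 1))⁻¹ ⟨0, hn⟩ : Fin n) = ⟨m + 1, hk⟩ := by
          rw [hKinv, s_apply_fix hα1 hαn hk hαk (by omega)]
        rw [hKval] at hIH
        simp only [Fin.val_mk] at hIH
        by_cases hcase : (b : ℕ) + 1 ≤ m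
        · -- small case: ι b = ⟨b+1⟩, use s_mul_c_comm
          have hcomm : (u * s n ((b : ℕ) + 1)) * c (m + 1) = M * s n ((b : ℕ) + 1 + 1) := by
            rw [mul_assoc, s_mul_c_comm hα1 (by omega) hk, hM, mul_assoc]
          rw [hcomm] at hIH
          have hιb : ι b = ⟨(b : ℕ) + 1, hι b hcase⟩ := by
            rw [hιdef]
            exact dif_pos hcase
          have hdM : dsc M (⟨(b : ℕ) + 1, hι b hcase⟩ : Fin (n-1)) := by
            unfold dsc
            rw [Fin.lt_def]
            show ((u ((c (m+1) : Perm (Fin n)) ⟨(b : ℕ) + 1 + 1, by omega⟩) : Fin n) : ℕ) <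
              ((u ((c (m+1) : Perm (Fin n)) ⟨(b : ℕ) + 1, by omega⟩) : Fin n) : ℕ)
            rw [hcM ((b : ℕ) + 1 + 1) (by omega) (by omega) (by omega) (by omega),
              hcM ((b : ℕ) + 1) (by omega) (by omega) (by omega) (by omega)]
            have f1 : (⟨(b : ℕ) + 1 + 1 - 1, by omega⟩ : Fin n) = ⟨(b : ℕ) + 1, by omega⟩ :=
              Fin.ext (show (b : ℕ) + 1 + 1 - 1 = (b : ℕ) + 1 by omega)
            have f2 : (⟨(b : ℕ) + 1 - 1, by omega⟩ : Fin n) = ⟨(b : ℕ), by omega⟩ :=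
              Fin.ext (show (b : ℕ) + 1 - 1 = (b : ℕ) by omega)
            rw [f1, f2]
            unfold dsc at hd
            rw [Fin.lt_def] at hd
            exact hd
          rw [hT, hG]
          dsimp only
          rw [if_pos hd, hιb, if_pos hdM]
          rw [show ((⟨(b : ℕ) + 1, hι b hcase⟩ : Fin (n-1)) : ℕ) = (b : ℕ) + 1 from rfl]
          push_cast
          calc ((b : ℚ) + 1) * Upsilon (u * s n ((b : ℕ) + 1))
              ≤ ((b : ℚ) + 1) * Upsilon (M * s n ((b : ℕ) + 1 + 1)) :=
                mul_le_mul_of_nonneg_left hIH (by positivity)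
            _ ≤ ((b : ℚ) + 1 + 1) * Upsilon (M * s n ((b : ℕ) + 1 + 1)) := by
                have hb2 : ((b : ℚ) + 1) ≤ ((b : ℚ) + 1 + 1) := by linarith
                exact mul_le_mul_of_nonneg_right hb2 (Upsilon_nonneg _)
        · -- big case: α ≥ m + 3, ι b = b, use s_mul_c_comm'
          have hαbig : (m + 1) + 2 ≤ (b : ℕ) + 1 := by omega
          have hcomm : (u * s n ((b : ℕ) + 1)) * c (m + 1) = M * s n ((b : ℕ) + 1) := by
            rw [mul_assoc, s_mul_c_comm' hαbig hαn, hM, mul_assoc]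
          rw [hcomm] at hIH
          have hιb : ι b = b := by
            rw [hιdef]
            exact dif_neg hcase
          have hdM : dsc M b := by
            unfold dsc
            rw [Fin.lt_def]
            show ((u ((c (m+1) : Perm (Fin n)) ⟨(b : ℕ) + 1, by omega⟩) : Fin n) : ℕ) <
              ((u ((c (m+1) : Perm (Fin n)) ⟨(b : ℕ), by omega⟩) : Fin n) : ℕ)
            rw [hcMfix ((b : ℕ) + 1) (by omega) (by omega), hcMfix (b : ℕ) (by omega) (by omega)]
            unfold dsc at hd
            rw [Fin.lt_def] at hd
            exact hd
          rw [hT, hG, hιb]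
          dsimp only
          rw [if_pos hd, if_pos hdM]
          exact mul_le_mul_of_nonneg_left hIH (by positivity)
      · -- non-descent: T b = 0
        rw [hT]
        dsimp only
        rw [if_neg hd]
        exact hGnonneg _
    -- injectivity of ι on erase b₀
    have hinj : ∀ x ∈ Finset.univ.erase (⟨m, hb0lt⟩ : Fin (n-1)),
        ∀ y ∈ Finset.univ.erase (⟨m, hb0lt⟩ : Fin (n-1)), ι x = ι y → x = y := by
      intro x hx y hy hxy
      have hxne : (x : ℕ) ≠ m := fun hcon =>
        (Finset.mem_erase.mp hx).1 (Fin.ext hcon)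
      have hyne : (y : ℕ) ≠ m := fun hcon =>
        (Finset.mem_erase.mp hy).1 (Fin.ext hcon)
      rw [hιdef] at hxy
      simp only at hxy
      apply Fin.ext
      by_cases h1 : (x : ℕ) + 1 ≤ m <;> by_cases h2 : (y : ℕ) + 1 ≤ m
      · rw [dif_pos h1, dif_pos h2, Fin.ext_iff] at hxy
        simp only [Fin.val_mk] at hxy
        omega
      · rw [dif_pos h1, dif_neg h2, Fin.ext_iff] at hxy
        simp only [Fin.val_mk] at hxy
        omega
      · rw [dif_neg h1, dif_pos h2, Fin.ext_iff] at hxy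
        simp only [Fin.val_mk] at hxy
        omega
      · rw [dif_neg h1, dif_neg h2, Fin.ext_iff] at hxy
        exact hxy
    -- assemble
    have hchain : (len u : ℚ) * Upsilon u ≤ (len u : ℚ) * Upsilon M := by
      rw [hrecu]
      rw [← Finset.add_sum_erase Finset.univ T (Finset.mem_univ (⟨m, hb0lt⟩ : Fin (n-1)))]
      have h1 : ∑ b ∈ Finset.univ.erase (⟨m, hb0lt⟩ : Fin (n-1)), T b ≤
          ∑ b ∈ Finset.univ.erase (⟨m, hb0lt⟩ : Fin (n-1)), G (ι b) :=
        Finset.sum_le_sum hterm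
      have h2 : ∑ b ∈ Finset.univ.erase (⟨m, hb0lt⟩ : Fin (n-1)), G (ι b) =
          ∑ b ∈ (Finset.univ.erase (⟨m, hb0lt⟩ : Fin (n-1))).image ι, G b :=
        (Finset.sum_image hinj).symm
      have h3 : ∑ b ∈ (Finset.univ.erase (⟨m, hb0lt⟩ : Fin (n-1))).image ι, G b ≤
          ∑ b, G b :=
        Finset.sum_le_sum_of_subset_of_nonneg (Finset.subset_univ _)
          (fun i _ _ => hGnonneg i)
      have h5 : ∑ b ∈ Finset.univ.erase (⟨m, hb0lt⟩ : Fin (n-1)), T b ≤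
          (len M : ℚ) * Upsilon M := by
        rw [hrecM]
        exact h1.trans (h2 ▸ h3)
      have hcast : (len u : ℚ) = ((m : ℚ) + 1) + (len M : ℚ) := by
        rw [← hlenM]
        push_cast
        ring
      calc T (⟨m, hb0lt⟩ : Fin (n-1)) +
            ∑ b ∈ Finset.univ.erase (⟨m, hb0lt⟩ : Fin (n-1)), T b
          ≤ ((m : ℚ) + 1) * Upsilon M + (len M : ℚ) * Upsilon M := add_le_add hTb0 h5
        _ = (len u : ℚ) * Upsilon M := by rw [hcast]; ring
    have hLQ : (0 : ℚ) < (len u : ℚ) := by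
      have hh : 0 < len u := by omega
      exact_mod_cast hh
    exact le_of_mul_le_mul_left hchain hLQ


/-- for every `n ≥ 1` there is a permutation `w ∈ S_n`
with `w(1) = 1` attaining the maximum of `Υ` over `S_n`. -/
theorem exists_max_with_first_fixed (n : ℕ) (hn : 1 ≤ n) :
    ∃ w : Perm (Fin n), app w 1 = 1 ∧
      ∀ v : Perm (Fin n), Upsilon v ≤ Upsilon w := by
  have hn' : 0 < n := hn
  obtain ⟨w₀, -, hmax⟩ := Finset.exists_max_image (Finset.univ : Finset (Perm (Fin n)))
    Upsilon ⟨1, Finset.mem_univ 1⟩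
  set k : ℕ := ((w₀⁻¹ ⟨0, hn'⟩ : Fin n) : ℕ) with hkdef
  have hk : k < n := (w₀⁻¹ ⟨0, hn'⟩).isLt
  refine ⟨w₀ * c k, ?_, ?_⟩
  · rw [app, dif_pos (by omega : 1 - 1 < n)]
    have h0 : (⟨1 - 1, by omega⟩ : Fin n) = ⟨0, hn'⟩ := Fin.ext (by norm_num)
    rw [h0]
    have hc0 : (c k : Perm (Fin n)) ⟨0, hn'⟩ = ⟨k, hk⟩ := by
      apply Fin.ext
      rw [c_apply hk]
      simp
    show ((w₀ ((c k : Perm (Fin n)) ⟨0, hn'⟩)) : ℕ) + 1 = 1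
    rw [hc0]
    have hw0 : w₀ ⟨k, hk⟩ = ⟨0, hn'⟩ := by
      have he : (⟨k, hk⟩ : Fin n) = w₀⁻¹ ⟨0, hn'⟩ := Fin.eta _ _
      rw [he]
      exact Equiv.apply_symm_apply w₀ ⟨0, hn'⟩
    rw [hw0]
  · intro v
    have h1 : Upsilon v ≤ Upsilon w₀ := hmax v (Finset.mem_univ v)
    have h2 : Upsilon w₀ ≤ Upsilon (w₀ * c k) := key hn' (len w₀) w₀ rfl
    exact h1.trans h2

end Schubert
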